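/- Monotonicity of elastification: if A and A' are deterministic partial Moore machines over Π with letter b and outputs in a join-semilattice, and A is pointwise dominated by A' (on every word where A has a run, A' has a run with output at least A's), then the elastification A_el is pointwise dominated by A'_el. -/
import Mathlib


/-- A deterministic Moore machine with a partial transition function over alphabet `A`
and outputs in `F`. -/
structure PMoore (A F : Type) where
  Q : Type
  [dec : DecidableEq Q]
  [fin : Fintype Q]
  init : Q
  step : Q → A → Option Q
  out : Q → F

attribute [instance] PMoore.dec PMoore.fin

/-- The (partial) run of the machine from a state on a word. -/
def PMoore.runFrom {A F : Type} (M : PMoore A F) : M.Q → List A → Option M.Q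
  | q, [] => some q
  | q, a :: w => (M.step q a).bind fun q' => M.runFrom q' w

/-- The (partial) output of the machine on a word. -/
def PMoore.output {A F : Type} (M : PMoore A F) (w : List A) : Option F :=
  (M.runFrom M.init w).map M.out

/-- Elastic: every defined `b`-transition is a self-loop. -/
def PMoore.Elastic {A F : Type} (M : PMoore A F) (b : A) : Prop :=
  ∀ q q', M.step q b = some q' → q' = q

/-- `R_b(S)`: the set of states reachable from `S` by a (possibly empty) sequence of
`b`-transitions. -/
noncomputable def PMoore.Rb {A F : Type} (M : PMoore A F) (b : A) (S : Finset M.Q) :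
    Finset M.Q := by
  classical
  exact Finset.univ.filter fun q' =>
    ∃ q ∈ S, Relation.ReflTransGen (fun x y => M.step x b = some y) q q'

/-- The transition function of the elastification: the `b`-closure subset construction.
On `a ≠ b` a set `S` goes to `R_b(δ(S,a))` (undefined if `δ(S,a)` is empty); on `b`
the set `S` maps to itself provided some state of `S` has a `b`-transition. -/
noncomputable def PMoore.elStep {A F : Type} [DecidableEq A] (M : PMoore A F) (b : A)
    (S : Finset M.Q) (a : A) : Option (Finset M.Q) := by
  classical
  exact if a = b then
    if ∃ q ∈ S, (M.step q b).isSome then some S else none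
  else
    let T : Finset M.Q := Finset.univ.filter fun q' => ∃ q ∈ S, M.step q a = some q'
    if T.Nonempty then some (M.Rb b T) else none

/-- The run of the elastification from a set-state. -/
noncomputable def PMoore.elRunFrom {A F : Type} [DecidableEq A] (M : PMoore A F) (b : A) :
    Finset M.Q → List A → Option (Finset M.Q)
  | S, [] => some S
  | S, a :: w => (M.elStep b S a).bind fun S' => M.elRunFrom b S' w

/-- The run of the elastification on a word, starting from the initial set `R_b({q₀})`. -/
noncomputable def PMoore.elRun {A F : Type} [DecidableEq A] (M : PMoore A F) (b : A)
    (w : List A) : Option (Finset M.Q) :=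
  M.elRunFrom b (M.Rb b {M.init}) w

/-- The output of a set-state of the elastification: the join of the outputs of its
elements (junk value on the empty set). -/
noncomputable def PMoore.joinOut {A F : Type} [SemilatticeSup F] (M : PMoore A F)
    (S : Finset M.Q) : F :=
  if h : S.Nonempty then S.sup' h M.out else M.out M.init

/-- The (partial) output of the elastification on a word. -/
noncomputable def PMoore.elOutput {A F : Type} [DecidableEq A] [SemilatticeSup F]
    (M : PMoore A F) (b : A) (w : List A) : Option F :=
  (M.elRun b w).map M.joinOut

section Aux
variable {A F : Type}

lemma runFrom_append (M : PMoore A F) (u v : List A) (q : M.Q) :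
    M.runFrom q (u ++ v) = (M.runFrom q u).bind fun q' => M.runFrom q' v := by
  induction u generalizing q with
  | nil => simp [PMoore.runFrom]
  | cons a u ih =>
    simp only [List.cons_append, PMoore.runFrom]
    cases M.step q a <;> simp [ih]

lemma rtg_of_replicate (M : PMoore A F) (b : A) (k : ℕ) (q q' : M.Q)
    (h : M.runFrom q (List.replicate k b) = some q') :
    Relation.ReflTransGen (fun x y => M.step x b = some y) q q' := by
  induction k generalizing q with
  | zero =>
    simp [PMoore.runFrom] at h
    exact h ▸ Relation.ReflTransGen.refl
  | succ k ih =>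
    rw [List.replicate_succ] at h
    simp only [PMoore.runFrom] at h
    cases hs : M.step q b with
    | none => simp [hs] at h
    | some q1 =>
      rw [hs] at h
      exact Relation.ReflTransGen.head hs (ih q1 h)

lemma replicate_of_rtg (M : PMoore A F) (b : A) (q q' : M.Q)
    (h : Relation.ReflTransGen (fun x y => M.step x b = some y) q q') :
    ∃ k, M.runFrom q (List.replicate k b) = some q' := by
  induction h with
  | refl => exact ⟨0, rfl⟩
  | tail _ hs ih =>
    obtain ⟨k, hk⟩ := ih
    refine ⟨k + 1, ?_⟩
    rw [List.replicate_succ', runFrom_append, hk]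
    simp [PMoore.runFrom, hs]

lemma mem_Rb (M : PMoore A F) (b : A) (S : Finset M.Q) (q' : M.Q) :
    q' ∈ M.Rb b S ↔ ∃ q ∈ S, Relation.ReflTransGen (fun x y => M.step x b = some y) q q' := by
  simp [PMoore.Rb]

/-- From a run of `M` on `u` and domination, get a run of `M'` on `u`. -/
lemma run_dom {F : Type} [SemilatticeSup F] (M M' : PMoore A F)
    (hdom : ∀ (w : List A) (x : F), M.output w = some x →
      ∃ y : F, M'.output w = some y ∧ x ≤ y)
    (u : List A) (q : M.Q) (h : M.runFrom M.init u = some q) :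
    ∃ q' : M'.Q, M'.runFrom M'.init u = some q' ∧ M.out q ≤ M'.out q' := by
  have hout : M.output u = some (M.out q) := by simp [PMoore.output, h]
  obtain ⟨y, hy, hle⟩ := hdom u (M.out q) hout
  simp only [PMoore.output, Option.map_eq_some_iff] at hy
  obtain ⟨q', hq', hyq⟩ := hy
  exact ⟨q', hq', hyq ▸ hle⟩

def ElInv {F : Type} [SemilatticeSup F] (M M' : PMoore A F) (S : Finset M.Q) (S' : Finset M'.Q) : Prop :=
  ∀ q ∈ S, ∃ (u : List A) (q' : M'.Q),
    M.runFrom M.init u = some q ∧ M'.runFrom M'.init u = some q' ∧ q' ∈ S'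

lemma key {F : Type} [DecidableEq A] [SemilatticeSup F] (M M' : PMoore A F) (b : A)
    (hdom : ∀ (w : List A) (x : F), M.output w = some x →
      ∃ y : F, M'.output w = some y ∧ x ≤ y) :
    ∀ (w : List A) (S T : Finset M.Q) (S' : Finset M'.Q),
      M.elRunFrom b S w = some T → ElInv M M' S S' → S.Nonempty →
      ∃ T', M'.elRunFrom b S' w = some T' ∧ T.Nonempty ∧ ElInv M M' T T' := by
  intro w
  induction w with
  | nil =>
    intro S T S' hrun hinv hne
    simp only [PMoore.elRunFrom, Option.some.injEq] at hrun
    exact ⟨S', rfl, hrun ▸ hne, hrun ▸ hinv⟩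
  | cons a w ih =>
    intro S T S' hrun hinv hne
    simp only [PMoore.elRunFrom] at hrun
    cases hstep : M.elStep b S a with
    | none => rw [hstep] at hrun; simp at hrun
    | some S1 =>
      rw [hstep] at hrun
      rw [Option.bind_some] at hrun
      by_cases hab : a = b
      · subst hab
        rw [PMoore.elStep, if_pos rfl] at hstep
        split_ifs at hstep with hcond
        · simp only [Option.some.injEq] at hstep
          subst hstep
          -- show M' step defined
          obtain ⟨q, hqS, hqb⟩ := hcond
          obtain ⟨u, q', hru, hru', hq'S'⟩ := hinv q hqS
          rw [Option.isSome_iff_exists] at hqb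
          obtain ⟨q2, hq2⟩ := hqb
          have hrun2 : M.runFrom M.init (u ++ [a]) = some q2 := by
            rw [runFrom_append, hru]
            simp [PMoore.runFrom, hq2]
          obtain ⟨q2', hrun2', _⟩ := run_dom M M' hdom _ _ hrun2
          rw [runFrom_append, hru', Option.bind_some] at hrun2'
          simp only [PMoore.runFrom] at hrun2'
          have hcond' : ∃ q' ∈ S', (M'.step q' a).isSome := by
            refine ⟨q', hq'S', ?_⟩
            cases hs : M'.step q' a with
            | none => rw [hs] at hrun2'; simp at hrun2'
            | some _ => simp
          have hstep' : M'.elStep a S' a = some S' := by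
            rw [PMoore.elStep, if_pos rfl, if_pos hcond']
          obtain ⟨T', hT', hTne, hTinv⟩ := ih S T S' hrun hinv hne
          refine ⟨T', ?_, hTne, hTinv⟩
          simp [PMoore.elRunFrom, hstep', hT']
      · rw [PMoore.elStep, if_neg hab] at hstep
        dsimp only at hstep
        split_ifs at hstep with hcond
        · simp only [Option.some.injEq] at hstep
          -- the target sets
          set Tm : Finset M.Q := Finset.univ.filter (fun q' => ∃ q ∈ S, M.step q a = some q') with hTm
          set Tm' : Finset M'.Q := Finset.univ.filter (fun q' => ∃ q ∈ S', M'.step q a = some q') with hTm'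
          -- S1 = Rb Tm
          have hS1 : S1 = M.Rb b Tm := hstep.symm
          -- transfer membership
          have htrans : ∀ q1 ∈ M.Rb b Tm, ∃ (u1 : List A) (q1' : M'.Q),
              M.runFrom M.init u1 = some q1 ∧ M'.runFrom M'.init u1 = some q1' ∧
              q1' ∈ M'.Rb b Tm' := by
            intro q1 hq1
            rw [mem_Rb] at hq1
            obtain ⟨q0, hq0, hrtg⟩ := hq1
            rw [hTm, Finset.mem_filter] at hq0
            obtain ⟨-, q, hqS, hqa⟩ := hq0
            obtain ⟨u, q', hru, hru', hq'S'⟩ := hinv q hqS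
            obtain ⟨k, hk⟩ := replicate_of_rtg M b _ _ hrtg
            have hrun1 : M.runFrom M.init (u ++ a :: List.replicate k b) = some q1 := by
              rw [runFrom_append, hru]
              simp [PMoore.runFrom, hqa, hk]
            obtain ⟨q1', hrun1', _⟩ := run_dom M M' hdom _ _ hrun1
            refine ⟨u ++ a :: List.replicate k b, q1', hrun1, hrun1', ?_⟩
            rw [runFrom_append, hru', Option.bind_some] at hrun1'
            simp only [PMoore.runFrom] at hrun1'
            cases hs : M'.step q' a with
            | none => rw [hs] at hrun1'; simp at hrun1'
            | some q0' =>
              rw [hs] at hrun1'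
              rw [mem_Rb]
              refine ⟨q0', ?_, rtg_of_replicate M' b k _ _ hrun1'⟩
              rw [hTm', Finset.mem_filter]
              exact ⟨Finset.mem_univ _, q', hq'S', hs⟩
          -- Tm' nonempty
          obtain ⟨q0, hq0⟩ := hcond
          have hq0' : q0 ∈ M.Rb b Tm := by
            rw [mem_Rb]; exact ⟨q0, hq0, Relation.ReflTransGen.refl⟩
          obtain ⟨u1, q1', _, _, hq1'⟩ := htrans q0 hq0'
          rw [mem_Rb] at hq1'
          obtain ⟨qq, hqq, -⟩ := hq1'
          have hcond' : Tm'.Nonempty := ⟨qq, hqq⟩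
          have hstep' : M'.elStep b S' a = some (M'.Rb b Tm') := by
            rw [PMoore.elStep, if_neg hab]
            exact if_pos hcond'
          have hS1ne : S1.Nonempty := ⟨q0, hS1 ▸ hq0'⟩
          have hinv1 : ElInv M M' S1 (M'.Rb b Tm') := by
            rw [hS1]; exact htrans
          obtain ⟨T', hT', hTne, hTinv⟩ := ih S1 T (M'.Rb b Tm') hrun hinv1 hS1ne
          refine ⟨T', ?_, hTne, hTinv⟩
          simp [PMoore.elRunFrom, hstep', hT']

end Aux

/-- Monotonicity of elastification: if `A` is pointwise dominated by `A'`, then the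
elastification of `A` is pointwise dominated by the elastification of `A'`. -/
theorem stmt16 {A F : Type} [DecidableEq A] [SemilatticeSup F]
    (M M' : PMoore A F) (b : A)
    (hdom : ∀ (w : List A) (x : F), M.output w = some x →
      ∃ y : F, M'.output w = some y ∧ x ≤ y) :
    ∀ (w : List A) (x : F), M.elOutput b w = some x →
      ∃ y : F, M'.elOutput b w = some y ∧ x ≤ y := by
  intro w x hx
  simp only [PMoore.elOutput, PMoore.elRun, Option.map_eq_some_iff] at hx
  obtain ⟨T, hT, hxT⟩ := hx
  have hinv0 : ElInv M M' (M.Rb b {M.init}) (M'.Rb b {M'.init}) := by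
    intro q hq
    rw [mem_Rb] at hq
    obtain ⟨q0, hq0, hrtg⟩ := hq
    simp only [Finset.mem_singleton] at hq0
    subst hq0
    obtain ⟨k, hk⟩ := replicate_of_rtg M b _ _ hrtg
    obtain ⟨q', hq', _⟩ := run_dom M M' hdom _ _ hk
    refine ⟨List.replicate k b, q', hk, hq', ?_⟩
    rw [mem_Rb]
    exact ⟨M'.init, Finset.mem_singleton_self _, rtg_of_replicate M' b k _ _ hq'⟩
  have hne0 : (M.Rb b {M.init}).Nonempty := by
    refine ⟨M.init, ?_⟩
    rw [mem_Rb]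
    exact ⟨M.init, Finset.mem_singleton_self _, Relation.ReflTransGen.refl⟩
  obtain ⟨T', hT', hTne, hTinv⟩ := key M M' b hdom w _ T _ hT hinv0 hne0
  have hT'ne : T'.Nonempty := by
    obtain ⟨q, hq⟩ := hTne
    obtain ⟨u, q', _, _, hq'⟩ := hTinv q hq
    exact ⟨q', hq'⟩
  refine ⟨M'.joinOut T', ?_, ?_⟩
  · simp [PMoore.elOutput, PMoore.elRun, hT']
  · rw [← hxT]
    rw [PMoore.joinOut, PMoore.joinOut, dif_pos hTne, dif_pos hT'ne]
    apply Finset.sup'_le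
    intro q hq
    obtain ⟨u, q', hru, hru', hq'⟩ := hTinv q hq
    obtain ⟨q'', hq'', hle⟩ := run_dom M M' hdom u q hru
    rw [hru'] at hq''
    injection hq'' with h
    subst h
    exact le_trans hle (Finset.le_sup' _ hq')
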